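/- Assume a = 1/4 (with b, d, e ∈ ℝ arbitrary). Let u be a C³ solution of the Longstaff–Schwartz equation on Ω. Then the function w(x,y,t) = e^{bt/2} · √x · ( ∂u/∂x(x,y,t) − 2b·u(x,y,t) ) is also a solution of the Longstaff–Schwartz equation on Ω. -/

import Mathlib

/-- Partial derivative in `x`. -/
noncomputable def pdX (u : ℝ → ℝ → ℝ → ℝ) (x y t : ℝ) : ℝ := deriv (fun z => u z y t) x

/-- Partial derivative in `y`. -/
noncomputable def pdY (u : ℝ → ℝ → ℝ → ℝ) (x y t : ℝ) : ℝ := deriv (fun z => u x z t) y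

/-- Partial derivative in `t`. -/
noncomputable def pdT (u : ℝ → ℝ → ℝ → ℝ) (x y t : ℝ) : ℝ := deriv (fun z => u x y z) t

/-- Second partial derivative in `x`. -/
noncomputable def pdXX (u : ℝ → ℝ → ℝ → ℝ) (x y t : ℝ) : ℝ := deriv (fun z => pdX u z y t) x

/-- Second partial derivative in `y`. -/
noncomputable def pdYY (u : ℝ → ℝ → ℝ → ℝ) (x y t : ℝ) : ℝ := deriv (fun z => pdY u x z t) y

/-- The domain `Ω = {(x,y,t) : x > 0, y > 0}`. -/
def Omega : Set (ℝ × ℝ × ℝ) := {p | 0 < p.1 ∧ 0 < p.2.1}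

/-- The Longstaff–Schwartz (Kolmogorov backward) equation
`u_t = −((a−bx)·u_x + (d−ey)·u_y + (x/2)·u_xx + (y/2)·u_yy)` holds at the point `(x,y,t)`. -/
def LSEq (a b d e : ℝ) (u : ℝ → ℝ → ℝ → ℝ) (x y t : ℝ) : Prop :=
  pdT u x y t =
    -((a - b * x) * pdX u x y t + (d - e * y) * pdY u x y t +
      x / 2 * pdXX u x y t + y / 2 * pdYY u x y t)

/-- `u` is a solution of the Longstaff–Schwartz equation on `Ω`: it is C² on `Ω` and
satisfies the equation at every point of `Ω`. -/
def IsLSSolution (a b d e : ℝ) (u : ℝ → ℝ → ℝ → ℝ) : Prop :=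
  ContDiffOn ℝ 2 (fun p : ℝ × ℝ × ℝ => u p.1 p.2.1 p.2.2) Omega ∧
  ∀ x y t : ℝ, 0 < x → 0 < y → LSEq a b d e u x y t

open Filter

/- ===== auxiliary development ===== -/

noncomputable def FF (u : ℝ → ℝ → ℝ → ℝ) : ℝ × ℝ × ℝ → ℝ := fun p => u p.1 p.2.1 p.2.2

lemma omega_isOpen : IsOpen Omega :=
  (isOpen_lt continuous_const continuous_fst).inter
    (isOpen_lt continuous_const (continuous_fst.comp continuous_snd))

lemma hasDerivAt_sl1 {E : Type*} [NormedAddCommGroup E] [NormedSpace ℝ E]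
    (G : ℝ × ℝ × ℝ → E) (G' : ℝ × ℝ × ℝ →L[ℝ] E) (x y t : ℝ)
    (hG : HasFDerivAt G G' (x, y, t)) :
    HasDerivAt (fun z => G (z, y, t)) (G' (1, 0, 0)) x := by
  have h : HasDerivAt (fun z : ℝ => ((z, y, t) : ℝ × ℝ × ℝ)) ((1:ℝ), (0:ℝ), (0:ℝ)) x :=
    HasDerivAt.prodMk (hasDerivAt_id x) (HasDerivAt.prodMk (hasDerivAt_const x y) (hasDerivAt_const x t))
  exact hG.comp_hasDerivAt x h

lemma hasDerivAt_sl2 {E : Type*} [NormedAddCommGroup E] [NormedSpace ℝ E]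
    (G : ℝ × ℝ × ℝ → E) (G' : ℝ × ℝ × ℝ →L[ℝ] E) (x y t : ℝ)
    (hG : HasFDerivAt G G' (x, y, t)) :
    HasDerivAt (fun z => G (x, z, t)) (G' (0, 1, 0)) y := by
  have h : HasDerivAt (fun z : ℝ => ((x, z, t) : ℝ × ℝ × ℝ)) ((0:ℝ), (1:ℝ), (0:ℝ)) y :=
    HasDerivAt.prodMk (hasDerivAt_const y x) (HasDerivAt.prodMk (hasDerivAt_id y) (hasDerivAt_const y t))
  exact hG.comp_hasDerivAt y h

lemma hasDerivAt_sl3 {E : Type*} [NormedAddCommGroup E] [NormedSpace ℝ E]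
    (G : ℝ × ℝ × ℝ → E) (G' : ℝ × ℝ × ℝ →L[ℝ] E) (x y t : ℝ)
    (hG : HasFDerivAt G G' (x, y, t)) :
    HasDerivAt (fun z => G (x, y, z)) (G' (0, 0, 1)) t := by
  have h : HasDerivAt (fun z : ℝ => ((x, y, z) : ℝ × ℝ × ℝ)) ((0:ℝ), (0:ℝ), (1:ℝ)) t :=
    HasDerivAt.prodMk (hasDerivAt_const t x) (HasDerivAt.prodMk (hasDerivAt_const t y) (hasDerivAt_id t))
  exact hG.comp_hasDerivAt t h

lemma hasFDerivAt_eval {E F : Type*} [NormedAddCommGroup E] [NormedSpace ℝ E]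
    [NormedAddCommGroup F] [NormedSpace ℝ F]
    {G : ℝ × ℝ × ℝ → (E →L[ℝ] F)} {q : ℝ × ℝ × ℝ}
    (hG : DifferentiableAt ℝ G q) (v : E) :
    HasFDerivAt (fun r => G r v)
      ((ContinuousLinearMap.apply ℝ F v).comp (fderiv ℝ G q)) q :=
  ((ContinuousLinearMap.apply ℝ F v).hasFDerivAt).comp q hG.hasFDerivAt

lemma hasFDerivAt_eval2 {E F : Type*} [NormedAddCommGroup E] [NormedSpace ℝ E]
    [NormedAddCommGroup F] [NormedSpace ℝ F]
    {G : ℝ × ℝ × ℝ → (E →L[ℝ] (E →L[ℝ] F))} {q : ℝ × ℝ × ℝ}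
    (hG : DifferentiableAt ℝ G q) (v w : E) :
    HasFDerivAt (fun r => G r v w)
      ((ContinuousLinearMap.apply ℝ F w).comp
        (((ContinuousLinearMap.apply ℝ (E →L[ℝ] F) v).comp (fderiv ℝ G q)))) q := by
  have h1 := hasFDerivAt_eval hG v
  have h2 := hasFDerivAt_eval (G := fun r => G r v) h1.differentiableAt w
  rwa [h1.fderiv] at h2

section LS

variable {u : ℝ → ℝ → ℝ → ℝ} (hu : ContDiffOn ℝ 3 (FF u) Omega)
variable {x y t : ℝ}
include hu

lemma cd3 (hx : 0 < x) (hy : 0 < y) : ContDiffAt ℝ 3 (FF u) (x, y, t) :=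
  hu.contDiffAt (omega_isOpen.mem_nhds ⟨hx, hy⟩)

lemma dF (hx : 0 < x) (hy : 0 < y) : DifferentiableAt ℝ (FF u) (x, y, t) :=
  (cd3 hu hx hy).differentiableAt (by norm_num)

lemma d1 (hx : 0 < x) (hy : 0 < y) : DifferentiableAt ℝ (fderiv ℝ (FF u)) (x, y, t) :=
  ((cd3 hu hx hy).fderiv_right (m := 2) (by norm_num)).differentiableAt (by norm_num)

lemma d2 (hx : 0 < x) (hy : 0 < y) :
    DifferentiableAt ℝ (fderiv ℝ (fderiv ℝ (FF u))) (x, y, t) :=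
  (((cd3 hu hx hy).fderiv_right (m := 2) (by norm_num)).fderiv_right (m := 1)
    (by norm_num)).differentiableAt (by norm_num)

lemma hdF1 (hx : 0 < x) (hy : 0 < y) :
    HasDerivAt (fun z => u z y t) (fderiv ℝ (FF u) (x, y, t) (1, 0, 0)) x :=
  hasDerivAt_sl1 (FF u) _ x y t (dF hu hx hy).hasFDerivAt

lemma hdF2 (hx : 0 < x) (hy : 0 < y) :
    HasDerivAt (fun z => u x z t) (fderiv ℝ (FF u) (x, y, t) (0, 1, 0)) y :=
  hasDerivAt_sl2 (FF u) _ x y t (dF hu hx hy).hasFDerivAt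

lemma hdF3 (hx : 0 < x) (hy : 0 < y) :
    HasDerivAt (fun z => u x y z) (fderiv ℝ (FF u) (x, y, t) (0, 0, 1)) t :=
  hasDerivAt_sl3 (FF u) _ x y t (dF hu hx hy).hasFDerivAt

lemma hdE1 (v : ℝ × ℝ × ℝ) (hx : 0 < x) (hy : 0 < y) :
    HasDerivAt (fun z => fderiv ℝ (FF u) (z, y, t) v)
      (fderiv ℝ (fderiv ℝ (FF u)) (x, y, t) (1, 0, 0) v) x := by
  have h := hasDerivAt_sl1 (fun r => fderiv ℝ (FF u) r v) _ x y t
    (hasFDerivAt_eval (d1 hu hx hy) v)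
  simpa using h

lemma hdE2 (v : ℝ × ℝ × ℝ) (hx : 0 < x) (hy : 0 < y) :
    HasDerivAt (fun z => fderiv ℝ (FF u) (x, z, t) v)
      (fderiv ℝ (fderiv ℝ (FF u)) (x, y, t) (0, 1, 0) v) y := by
  have h := hasDerivAt_sl2 (fun r => fderiv ℝ (FF u) r v) _ x y t
    (hasFDerivAt_eval (d1 hu hx hy) v)
  simpa using h

lemma hdE3 (v : ℝ × ℝ × ℝ) (hx : 0 < x) (hy : 0 < y) :
    HasDerivAt (fun z => fderiv ℝ (FF u) (x, y, z) v)
      (fderiv ℝ (fderiv ℝ (FF u)) (x, y, t) (0, 0, 1) v) t := by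
  have h := hasDerivAt_sl3 (fun r => fderiv ℝ (FF u) r v) _ x y t
    (hasFDerivAt_eval (d1 hu hx hy) v)
  simpa using h

lemma hdDE1 (v w : ℝ × ℝ × ℝ) (hx : 0 < x) (hy : 0 < y) :
    HasDerivAt (fun z => fderiv ℝ (fderiv ℝ (FF u)) (z, y, t) v w)
      (fderiv ℝ (fderiv ℝ (fderiv ℝ (FF u))) (x, y, t) (1, 0, 0) v w) x := by
  have h := hasDerivAt_sl1 (fun r => fderiv ℝ (fderiv ℝ (FF u)) r v w) _ x y t
    (hasFDerivAt_eval2 (d2 hu hx hy) v w)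
  simpa using h

lemma hdDE2 (v w : ℝ × ℝ × ℝ) (hx : 0 < x) (hy : 0 < y) :
    HasDerivAt (fun z => fderiv ℝ (fderiv ℝ (FF u)) (x, z, t) v w)
      (fderiv ℝ (fderiv ℝ (fderiv ℝ (FF u))) (x, y, t) (0, 1, 0) v w) y := by
  have h := hasDerivAt_sl2 (fun r => fderiv ℝ (fderiv ℝ (FF u)) r v w) _ x y t
    (hasFDerivAt_eval2 (d2 hu hx hy) v w)
  simpa using h

lemma rX (hx : 0 < x) (hy : 0 < y) :
    pdX u x y t = fderiv ℝ (FF u) (x, y, t) (1, 0, 0) := (hdF1 hu (t := t) hx hy).deriv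

lemma rY (hx : 0 < x) (hy : 0 < y) :
    pdY u x y t = fderiv ℝ (FF u) (x, y, t) (0, 1, 0) := (hdF2 hu (t := t) hx hy).deriv

lemma rT (hx : 0 < x) (hy : 0 < y) :
    pdT u x y t = fderiv ℝ (FF u) (x, y, t) (0, 0, 1) := (hdF3 hu (t := t) hx hy).deriv

lemma hpX (hx : 0 < x) (hy : 0 < y) :
    HasDerivAt (fun z => pdX u z y t)
      (fderiv ℝ (fderiv ℝ (FF u)) (x, y, t) (1, 0, 0) (1, 0, 0)) x := by
  refine (hdE1 hu (t := t) (1,0,0) hx hy).congr_of_eventuallyEq ?_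
  filter_upwards [Ioi_mem_nhds hx] with z hz
  exact rX hu hz hy

lemma hpY (hx : 0 < x) (hy : 0 < y) :
    HasDerivAt (fun z => pdX u x z t)
      (fderiv ℝ (fderiv ℝ (FF u)) (x, y, t) (0, 1, 0) (1, 0, 0)) y := by
  refine (hdE2 hu (t := t) (1,0,0) hx hy).congr_of_eventuallyEq ?_
  filter_upwards [Ioi_mem_nhds hy] with z hz
  exact rX hu hx hz

lemma hpT (hx : 0 < x) (hy : 0 < y) :
    HasDerivAt (fun s => pdX u x y s)
      (fderiv ℝ (fderiv ℝ (FF u)) (x, y, t) (0, 0, 1) (1, 0, 0)) t := by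
  refine (hdE3 hu (t := t) (1,0,0) hx hy).congr_of_eventuallyEq ?_
  exact Eventually.of_forall fun s => rX hu hx hy

lemma hqX (hx : 0 < x) (hy : 0 < y) :
    HasDerivAt (fun z => pdY u z y t)
      (fderiv ℝ (fderiv ℝ (FF u)) (x, y, t) (1, 0, 0) (0, 1, 0)) x := by
  refine (hdE1 hu (t := t) (0,1,0) hx hy).congr_of_eventuallyEq ?_
  filter_upwards [Ioi_mem_nhds hx] with z hz
  exact rY hu hz hy

lemma hqY (hx : 0 < x) (hy : 0 < y) :
    HasDerivAt (fun z => pdY u x z t)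
      (fderiv ℝ (fderiv ℝ (FF u)) (x, y, t) (0, 1, 0) (0, 1, 0)) y := by
  refine (hdE2 hu (t := t) (0,1,0) hx hy).congr_of_eventuallyEq ?_
  filter_upwards [Ioi_mem_nhds hy] with z hz
  exact rY hu hx hz

lemma htX (hx : 0 < x) (hy : 0 < y) :
    HasDerivAt (fun z => pdT u z y t)
      (fderiv ℝ (fderiv ℝ (FF u)) (x, y, t) (1, 0, 0) (0, 0, 1)) x := by
  refine (hdE1 hu (t := t) (0,0,1) hx hy).congr_of_eventuallyEq ?_
  filter_upwards [Ioi_mem_nhds hx] with z hz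
  exact rT hu hz hy

lemma rXX (hx : 0 < x) (hy : 0 < y) :
    pdXX u x y t = fderiv ℝ (fderiv ℝ (FF u)) (x, y, t) (1, 0, 0) (1, 0, 0) :=
  (hpX hu (t := t) hx hy).deriv

lemma rYY (hx : 0 < x) (hy : 0 < y) :
    pdYY u x y t = fderiv ℝ (fderiv ℝ (FF u)) (x, y, t) (0, 1, 0) (0, 1, 0) :=
  (hqY hu hx hy).deriv

lemma hxxX (hx : 0 < x) (hy : 0 < y) :
    HasDerivAt (fun z => pdXX u z y t)
      (fderiv ℝ (fderiv ℝ (fderiv ℝ (FF u))) (x, y, t) (1, 0, 0) (1, 0, 0) (1, 0, 0)) x := by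
  refine (hdDE1 hu (t := t) (1,0,0) (1,0,0) hx hy).congr_of_eventuallyEq ?_
  filter_upwards [Ioi_mem_nhds hx] with z hz
  exact rXX hu hz hy

lemma hyyX (hx : 0 < x) (hy : 0 < y) :
    HasDerivAt (fun z => pdYY u z y t)
      (fderiv ℝ (fderiv ℝ (fderiv ℝ (FF u))) (x, y, t) (1, 0, 0) (0, 1, 0) (0, 1, 0)) x := by
  refine (hdDE1 hu (t := t) (0,1,0) (0,1,0) hx hy).congr_of_eventuallyEq ?_
  filter_upwards [Ioi_mem_nhds hx] with z hz
  exact rYY hu hz hy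


noncomputable def Wfun (b : ℝ) (u : ℝ → ℝ → ℝ → ℝ) : ℝ → ℝ → ℝ → ℝ :=
  fun x y t => Real.exp (b * t / 2) * Real.sqrt x * (pdX u x y t - 2 * b * u x y t)

lemma wXrep (b : ℝ) (hx : 0 < x) (hy : 0 < y) :
    pdX (Wfun b u) x y t =
      Real.exp (b * t / 2) * (1 / (2 * Real.sqrt x)) *
        (fderiv ℝ (FF u) (x, y, t) (1, 0, 0) - 2 * b * u x y t)
      + Real.exp (b * t / 2) * Real.sqrt x *
        (fderiv ℝ (fderiv ℝ (FF u)) (x, y, t) (1, 0, 0) (1, 0, 0)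
          - 2 * b * fderiv ℝ (FF u) (x, y, t) (1, 0, 0)) := by
  have h1 : HasDerivAt (fun z : ℝ => Real.sqrt z) (1 / (2 * Real.sqrt x)) x :=
    Real.hasDerivAt_sqrt hx.ne'
  have hC := (h1.const_mul (Real.exp (b * t / 2))).mul
    ((hpX hu (t := t) hx hy).sub ((hdF1 hu (t := t) hx hy).const_mul (2 * b)))
  have h2 := hC.deriv
  beta_reduce at h2
  simp only [Pi.sub_apply] at h2
  rw [rX hu hx hy] at h2
  exact h2

lemma wYrep (b : ℝ) (hx : 0 < x) (hy : 0 < y) :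
    pdY (Wfun b u) x y t =
      Real.exp (b * t / 2) * Real.sqrt x *
        (fderiv ℝ (fderiv ℝ (FF u)) (x, y, t) (0, 1, 0) (1, 0, 0)
          - 2 * b * fderiv ℝ (FF u) (x, y, t) (0, 1, 0)) := by
  have hC := ((hpY hu (t := t) hx hy).sub ((hdF2 hu (t := t) hx hy).const_mul (2 * b))).const_mul
    (Real.exp (b * t / 2) * Real.sqrt x)
  exact hC.deriv

lemma wTrep (b : ℝ) (hx : 0 < x) (hy : 0 < y) :
    pdT (Wfun b u) x y t =
      Real.exp (b * t / 2) * (b / 2) * Real.sqrt x *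
        (fderiv ℝ (FF u) (x, y, t) (1, 0, 0) - 2 * b * u x y t)
      + Real.exp (b * t / 2) * Real.sqrt x *
        (fderiv ℝ (fderiv ℝ (FF u)) (x, y, t) (0, 0, 1) (1, 0, 0)
          - 2 * b * fderiv ℝ (FF u) (x, y, t) (0, 0, 1)) := by
  have h0 : HasDerivAt (fun s : ℝ => b * s / 2) (b / 2) t := by
    simpa using ((hasDerivAt_id t).const_mul b).div_const 2
  have hE : HasDerivAt (fun s => Real.exp (b * s / 2)) (Real.exp (b * t / 2) * (b / 2)) t :=
    h0.exp
  have hC := (hE.mul_const (Real.sqrt x)).mul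
    ((hpT hu (t := t) hx hy).sub ((hdF3 hu (t := t) hx hy).const_mul (2 * b)))
  have h2 := hC.deriv
  beta_reduce at h2
  simp only [Pi.sub_apply] at h2
  rw [rX hu hx hy] at h2
  exact h2

lemma wXXrep (b : ℝ) (hx : 0 < x) (hy : 0 < y) :
    pdXX (Wfun b u) x y t =
      Real.exp (b * t / 2) * (-(1 / (4 * x * Real.sqrt x))) *
        (fderiv ℝ (FF u) (x, y, t) (1, 0, 0) - 2 * b * u x y t)
      + Real.exp (b * t / 2) * (1 / (2 * Real.sqrt x)) *
        (fderiv ℝ (fderiv ℝ (FF u)) (x, y, t) (1, 0, 0) (1, 0, 0)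
          - 2 * b * fderiv ℝ (FF u) (x, y, t) (1, 0, 0))
      + (Real.exp (b * t / 2) * (1 / (2 * Real.sqrt x)) *
          (fderiv ℝ (fderiv ℝ (FF u)) (x, y, t) (1, 0, 0) (1, 0, 0)
            - 2 * b * fderiv ℝ (FF u) (x, y, t) (1, 0, 0))
        + Real.exp (b * t / 2) * Real.sqrt x *
          (fderiv ℝ (fderiv ℝ (fderiv ℝ (FF u))) (x, y, t) (1, 0, 0) (1, 0, 0) (1, 0, 0)
            - 2 * b * fderiv ℝ (fderiv ℝ (FF u)) (x, y, t) (1, 0, 0) (1, 0, 0))) := by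
  have hs : 0 < Real.sqrt x := Real.sqrt_pos.mpr hx
  have h1 : HasDerivAt (fun z : ℝ => Real.sqrt z) (1 / (2 * Real.sqrt x)) x :=
    Real.hasDerivAt_sqrt hx.ne'
  have hinv : HasDerivAt (fun z : ℝ => 1 / (2 * Real.sqrt z)) (-(1 / (4 * x * Real.sqrt x))) x := by
    have h := (hasDerivAt_const x (1:ℝ)).div (h1.const_mul 2) (by positivity)
    beta_reduce at h
    have hval : (0 * (2 * Real.sqrt x) - 1 * (2 * (1 / (2 * Real.sqrt x)))) / (2 * Real.sqrt x) ^ 2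
        = -(1 / (4 * x * Real.sqrt x)) := by
      have hsq : Real.sqrt x ^ 2 = x := Real.sq_sqrt hx.le
      field_simp; nlinarith [hsq, hs]
    rwa [hval] at h
  have p1 := (hinv.const_mul (Real.exp (b * t / 2))).mul
    ((hdE1 hu (t := t) (1,0,0) hx hy).sub ((hdF1 hu (t := t) hx hy).const_mul (2 * b)))
  have p2 := (h1.const_mul (Real.exp (b * t / 2))).mul
    ((hdDE1 hu (t := t) (1,0,0) (1,0,0) hx hy).sub ((hdE1 hu (t := t) (1,0,0) hx hy).const_mul (2 * b)))
  have hp := p1.add p2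
  have hev : (fun z => pdX (Wfun b u) z y t) =ᶠ[nhds x] (fun z =>
      Real.exp (b * t / 2) * (1 / (2 * Real.sqrt z)) *
        (fderiv ℝ (FF u) (z, y, t) (1, 0, 0) - 2 * b * u z y t)
      + Real.exp (b * t / 2) * Real.sqrt z *
        (fderiv ℝ (fderiv ℝ (FF u)) (z, y, t) (1, 0, 0) (1, 0, 0)
          - 2 * b * fderiv ℝ (FF u) (z, y, t) (1, 0, 0))) := by
    filter_upwards [Ioi_mem_nhds hx] with z hz
    exact wXrep hu b hz hy
  exact (hp.congr_of_eventuallyEq hev).deriv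

lemma wYYrep (b : ℝ) (hx : 0 < x) (hy : 0 < y) :
    pdYY (Wfun b u) x y t =
      Real.exp (b * t / 2) * Real.sqrt x *
        (fderiv ℝ (fderiv ℝ (fderiv ℝ (FF u))) (x, y, t) (0, 1, 0) (0, 1, 0) (1, 0, 0)
          - 2 * b * fderiv ℝ (fderiv ℝ (FF u)) (x, y, t) (0, 1, 0) (0, 1, 0)) := by
  have hp := ((hdDE2 hu (t := t) (0,1,0) (1,0,0) hx hy).sub
      ((hdE2 hu (t := t) (0,1,0) hx hy).const_mul (2 * b))).const_mul
      (Real.exp (b * t / 2) * Real.sqrt x)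
  have hev : (fun z => pdY (Wfun b u) x z t) =ᶠ[nhds y] (fun z =>
      Real.exp (b * t / 2) * Real.sqrt x *
        (fderiv ℝ (fderiv ℝ (FF u)) (x, z, t) (0, 1, 0) (1, 0, 0)
          - 2 * b * fderiv ℝ (FF u) (x, z, t) (0, 1, 0))) := by
    filter_upwards [Ioi_mem_nhds hy] with z hz
    exact wYrep hu b hx hz
  exact (hp.congr_of_eventuallyEq hev).deriv

end LS

set_option maxHeartbeats 2000000 in
/-- Infinitesimal symmetry action (`v₃` on solutions) when `a = 1/4`:
if `u` is a C³ solution of the Longstaff–Schwartz equation on `Ω`, then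
`w(x,y,t) = e^{bt/2} · √x · (u_x(x,y,t) − 2b·u(x,y,t))` is also a solution on `Ω`. -/
theorem ls_mu1_is_solution (a b d e : ℝ) (ha : a = 1 / 4)
    (u : ℝ → ℝ → ℝ → ℝ)
    (hu : ContDiffOn ℝ 3 (fun p : ℝ × ℝ × ℝ => u p.1 p.2.1 p.2.2) Omega)
    (heq : ∀ x y t : ℝ, 0 < x → 0 < y → LSEq a b d e u x y t) :
    IsLSSolution a b d e
      (fun x y t =>
        Real.exp (b * t / 2) * Real.sqrt x * (pdX u x y t - 2 * b * u x y t)) := by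
  subst ha
  have hu' : ContDiffOn ℝ 3 (FF u) Omega := hu
  constructor
  · -- C² regularity on Ω
    refine ContDiffOn.congr (f := fun p : ℝ × ℝ × ℝ =>
      Real.exp (b * p.2.2 / 2) * Real.sqrt p.1 *
        (fderiv ℝ (FF u) p (1, 0, 0) - 2 * b * FF u p)) ?_ ?_
    · have g1 : ContDiffOn ℝ 2 (fun p : ℝ × ℝ × ℝ => Real.exp (b * p.2.2 / 2)) Omega := by
        apply ContDiff.contDiffOn
        exact Real.contDiff_exp.comp
          ((contDiff_const.mul (contDiff_snd.comp contDiff_snd)).div_const 2)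
      have g2 : ContDiffOn ℝ 2 (fun p : ℝ × ℝ × ℝ => Real.sqrt p.1) Omega := fun p hp =>
        ((Real.contDiffAt_sqrt (ne_of_gt hp.1)).comp p contDiffAt_fst).contDiffWithinAt
      have g3 : ContDiffOn ℝ 2 (fun p : ℝ × ℝ × ℝ => fderiv ℝ (FF u) p (1, 0, 0)) Omega := by
        have h := hu'.fderiv_of_isOpen omega_isOpen (m := 2) (by norm_num)
        exact (ContinuousLinearMap.apply ℝ ℝ ((1:ℝ), (0:ℝ), (0:ℝ))).contDiff.comp_contDiffOn h
      have g4 : ContDiffOn ℝ 2 (FF u) Omega := hu'.of_le (by norm_num)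
      exact (g1.mul g2).mul (g3.sub (contDiffOn_const.mul g4))
    · intro p hp
      have h := rX hu' (x := p.1) (y := p.2.1) (t := p.2.2) hp.1 hp.2
      simp only []
      rw [h]
      rfl
  · intro x y t hx hy
    have hmem : ((x, y, t) : ℝ × ℝ × ℝ) ∈ Omega := ⟨hx, hy⟩
    show LSEq (1/4) b d e (Wfun b u) x y t
    unfold LSEq
    rw [wTrep hu' (t := t) b hx hy, wXrep hu' (t := t) b hx hy, wYrep hu' (t := t) b hx hy,
      wXXrep hu' (t := t) b hx hy, wYYrep hu' (t := t) b hx hy]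
    -- symmetry of second derivatives
    have hS2 : ∀ v w : ℝ × ℝ × ℝ,
        fderiv ℝ (fderiv ℝ (FF u)) (x, y, t) v w = fderiv ℝ (fderiv ℝ (FF u)) (x, y, t) w v :=
      (cd3 hu' (t := t) hx hy).isSymmSndFDerivAt (by norm_num)
    have hS3 : ∀ v w : ℝ × ℝ × ℝ,
        fderiv ℝ (fderiv ℝ (fderiv ℝ (FF u))) (x, y, t) v w
          = fderiv ℝ (fderiv ℝ (fderiv ℝ (FF u))) (x, y, t) w v :=
      ((cd3 hu' (t := t) hx hy).fderiv_right (m := 2) (by norm_num)).isSymmSndFDerivAt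
        (by norm_num)
    -- third derivative symmetry : u_yyx = u_xyy
    have hsym3 : fderiv ℝ (fderiv ℝ (fderiv ℝ (FF u))) (x, y, t) (0, 1, 0) (0, 1, 0) (1, 0, 0)
        = fderiv ℝ (fderiv ℝ (fderiv ℝ (FF u))) (x, y, t) (1, 0, 0) (0, 1, 0) (0, 1, 0) := by
      have hin : (fun q => fderiv ℝ (fderiv ℝ (FF u)) q (0, 1, 0) (1, 0, 0))
          =ᶠ[nhds ((x, y, t) : ℝ × ℝ × ℝ)]
          (fun q => fderiv ℝ (fderiv ℝ (FF u)) q (1, 0, 0) (0, 1, 0)) := by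
        filter_upwards [omega_isOpen.mem_nhds hmem] with q hq
        exact (hu'.contDiffAt (omega_isOpen.mem_nhds hq)).isSymmSndFDerivAt (by norm_num) _ _
      have h1 := (hasFDerivAt_eval2 (d2 hu' (t := t) hx hy)
        (((0:ℝ), (1:ℝ), (0:ℝ))) (((1:ℝ), (0:ℝ), (0:ℝ)))).fderiv
      have h2 := (hasFDerivAt_eval2 (d2 hu' (t := t) hx hy)
        (((1:ℝ), (0:ℝ), (0:ℝ))) (((0:ℝ), (1:ℝ), (0:ℝ)))).fderiv
      have h3 := hin.fderiv_eq (𝕜 := ℝ)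
      rw [h1, h2] at h3
      have h4 := congrArg (fun L : (ℝ × ℝ × ℝ) →L[ℝ] ℝ => L (0, 1, 0)) h3
      simp only [ContinuousLinearMap.coe_comp', Function.comp_apply,
        ContinuousLinearMap.apply_apply] at h4
      rw [h4]
      exact congrArg (fun L : (ℝ × ℝ × ℝ) →L[ℝ] ℝ => L (0, 1, 0)) (hS3 (0, 1, 0) (1, 0, 0))
    -- differentiated PDE in x
    have hevB : (fun z => pdT u z y t) =ᶠ[nhds x] (fun z =>
        -((1/4 - b * z) * fderiv ℝ (FF u) (z, y, t) (1, 0, 0)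
          + (d - e * y) * fderiv ℝ (FF u) (z, y, t) (0, 1, 0)
          + z / 2 * fderiv ℝ (fderiv ℝ (FF u)) (z, y, t) (1, 0, 0) (1, 0, 0)
          + y / 2 * fderiv ℝ (fderiv ℝ (FF u)) (z, y, t) (0, 1, 0) (0, 1, 0))) := by
      filter_upwards [Ioi_mem_nhds hx] with z hz
      have h := heq z y t hz hy
      unfold LSEq at h
      rw [rX hu' hz hy, rY hu' hz hy, rXX hu' hz hy, rYY hu' hz hy] at h
      exact h
    have haa : HasDerivAt (fun z : ℝ => 1/4 - b * z) (-b) x := by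
      simpa using ((hasDerivAt_id x).const_mul b).const_sub (1/4 : ℝ)
    have h1' := haa.mul (hdE1 hu' (t := t) ((1:ℝ),(0:ℝ),(0:ℝ)) hx hy)
    have h2' := (hdE1 hu' (t := t) ((0:ℝ),(1:ℝ),(0:ℝ)) hx hy).const_mul (d - e * y)
    have h3' := ((hasDerivAt_id x).div_const 2).mul
      (hdDE1 hu' (t := t) ((1:ℝ),(0:ℝ),(0:ℝ)) ((1:ℝ),(0:ℝ),(0:ℝ)) hx hy)
    have h4' := (hdDE1 hu' (t := t) ((0:ℝ),(1:ℝ),(0:ℝ)) ((0:ℝ),(1:ℝ),(0:ℝ)) hx hy).const_mul (y / 2)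
    have hsum := (((h1'.add h2').add h3').add h4').neg
    have hB := (htX hu' (t := t) hx hy).unique (hsum.congr_of_eventuallyEq hevB)
    -- the PDE itself
    have hA3 : fderiv ℝ (FF u) (x, y, t) (0, 0, 1) =
        -((1/4 - b * x) * fderiv ℝ (FF u) (x, y, t) (1, 0, 0)
          + (d - e * y) * fderiv ℝ (FF u) (x, y, t) (0, 1, 0)
          + x / 2 * fderiv ℝ (fderiv ℝ (FF u)) (x, y, t) (1, 0, 0) (1, 0, 0)
          + y / 2 * fderiv ℝ (fderiv ℝ (FF u)) (x, y, t) (0, 1, 0) (0, 1, 0)) := by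
      have h := heq x y t hx hy
      unfold LSEq at h
      rw [rX hu' hx hy, rY hu' hx hy, rT hu' hx hy, rXX hu' hx hy, rYY hu' hx hy] at h
      exact h
    rw [hS2 (0, 0, 1) (1, 0, 0), hS2 (0, 1, 0) (1, 0, 0), hsym3, hB, hA3]
    beta_reduce
    have hs : (0:ℝ) < Real.sqrt x := Real.sqrt_pos.mpr hx
    have hsq : Real.sqrt x ^ 2 = x := Real.sq_sqrt hx.le
    set U0 := u x y t with hU0
    set A1 := fderiv ℝ (FF u) (x, y, t) (1, 0, 0) with hA1
    set A2 := fderiv ℝ (FF u) (x, y, t) (0, 1, 0) with hA2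
    set B11 := fderiv ℝ (fderiv ℝ (FF u)) (x, y, t) (1, 0, 0) (1, 0, 0) with hB11
    set B22 := fderiv ℝ (fderiv ℝ (FF u)) (x, y, t) (0, 1, 0) (0, 1, 0) with hB22
    set B12 := fderiv ℝ (fderiv ℝ (FF u)) (x, y, t) (1, 0, 0) (0, 1, 0) with hB12
    set C111 := fderiv ℝ (fderiv ℝ (fderiv ℝ (FF u))) (x, y, t) (1, 0, 0) (1, 0, 0) (1, 0, 0) with hC111
    set C122 := fderiv ℝ (fderiv ℝ (fderiv ℝ (FF u))) (x, y, t) (1, 0, 0) (0, 1, 0) (0, 1, 0) with hC122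
    set s := Real.sqrt x with hsdef
    set E0 := Real.exp (b * t / 2) with hE0
    have hsne : s ≠ 0 := ne_of_gt hs
    clear_value U0 A1 A2 B11 B22 B12 C111 C122 s E0
    clear hsum hB hA3 h1' h2' h3' h4' hevB haa hS2 hS3 hsym3 hmem hu hu' heq hsdef hE0 hU0 hA1 hA2 hB11 hB22 hB12 hC111 hC122 hx hy hs
    rw [← hsq]
    simp only [id]
    field_simp
    ring
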